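/- Let m ≥ 2 and n ≥ 1 be integers and let 1 ≤ d ≤ n. Let P_d be the set of ordered pairs (a,b) of lists over Fin m of length at most n such that the longest common prefix of a and b has length exactly d. Then (m − 1)·|P_d| = m^d·(m^{2(n−d)+1} − 1). -/
import Mathlib


/-- The longest common prefix of two lists. -/
def lcp {α : Type*} [DecidableEq α] : List α → List α → List α
  | a :: as, b :: bs => if a = b then a :: lcp as bs else []
  | _, _ => []

lemma lcp_nil_left {α : Type*} [DecidableEq α] (l : List α) : lcp [] l = [] := by
  cases l <;> rfl

lemma lcp_nil_right {α : Type*} [DecidableEq α] (l : List α) : lcp l [] = [] := by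
  cases l <;> rfl

lemma lcp_cons {α : Type*} [DecidableEq α] (a b : α) (as bs : List α) :
    lcp (a :: as) (b :: bs) = if a = b then a :: lcp as bs else [] := rfl

/-- The finset of lists over `Fin m` of length at most `n`. -/
def Ln (m : ℕ) : ℕ → Finset (List (Fin m))
  | 0 => {[]}
  | n + 1 => insert [] ((Finset.univ ×ˢ Ln m n).image fun p => p.1 :: p.2)

lemma mem_Ln (m : ℕ) : ∀ (n : ℕ) (l : List (Fin m)), l ∈ Ln m n ↔ l.length ≤ n := by
  intro n
  induction n with
  | zero => intro l; cases l <;> simp [Ln]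
  | succ n ih =>
      intro l
      cases l with
      | nil => simp [Ln]
      | cons x xs =>
          simp [Ln, ih, Nat.succ_le_succ_iff]

lemma card_Ln_succ (m n : ℕ) : (Ln m (n + 1)).card = 1 + m * (Ln m n).card := by
  rw [Ln, Finset.card_insert_of_notMem, Finset.card_image_of_injective, Finset.card_product]
  · simp; ring
  · intro p q h
    simpa [Prod.ext_iff] using h
  · simp

/-- Number of pairs with lcp of length exactly `d`. -/
def Cc (m n d : ℕ) : ℕ :=
  ((Ln m n ×ˢ Ln m n).filter fun p => (lcp p.1 p.2).length = d).card

lemma step (m n : ℕ) (q : ℕ → Prop) [DecidablePred q] (hq0 : ¬ q 0) :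
    ((Ln m (n+1) ×ˢ Ln m (n+1)).filter fun p => q (lcp p.1 p.2).length).card
      = m * ((Ln m n ×ˢ Ln m n).filter fun p => q ((lcp p.1 p.2).length + 1)).card := by
  have himg : ((Finset.univ ×ˢ ((Ln m n ×ˢ Ln m n).filter
        fun p => q ((lcp p.1 p.2).length + 1))).image
        (fun x : Fin m × (List (Fin m) × List (Fin m)) => (x.1 :: x.2.1, x.1 :: x.2.2)))
      = ((Ln m (n+1) ×ˢ Ln m (n+1)).filter fun p => q (lcp p.1 p.2).length) := by
    ext ⟨a, b⟩
    simp only [Finset.mem_image, Finset.mem_filter, Finset.mem_product, Finset.mem_univ,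
      true_and, mem_Ln, Prod.exists]
    constructor
    · rintro ⟨x, u, v, ⟨⟨hu, hv⟩, hq⟩, h⟩
      obtain ⟨h1, h2⟩ := Prod.mk.injEq .. ▸ h
      subst h1; subst h2
      refine ⟨⟨by simpa using hu, by simpa using hv⟩, ?_⟩
      simpa [lcp_cons] using hq
    · rintro ⟨⟨ha, hb⟩, hq⟩
      cases a with
      | nil => exact absurd hq (by simpa [lcp_nil_left] using hq0)
      | cons x xs =>
        cases b with
        | nil => exact absurd hq (by simpa [lcp_nil_right] using hq0)
        | cons y ys =>
          rcases eq_or_ne x y with rfl | hxy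
          · refine ⟨x, xs, ys, ⟨⟨?_, ?_⟩, ?_⟩, rfl⟩
            · simpa [Nat.succ_le_succ_iff] using ha
            · simpa [Nat.succ_le_succ_iff] using hb
            · simpa [lcp_cons] using hq
          · exact absurd hq (by simpa [lcp_cons, hxy] using hq0)
  rw [← himg, Finset.card_image_of_injective, Finset.card_product, Finset.card_univ,
    Fintype.card_fin]
  intro p r h
  obtain ⟨h1, h2⟩ := Prod.mk.injEq .. ▸ h
  obtain ⟨e1, e2⟩ := List.cons.injEq .. ▸ h1
  obtain ⟨_, e3⟩ := List.cons.injEq .. ▸ h2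
  exact Prod.ext e1 (Prod.ext e2 e3)

lemma s_int (m : ℕ) : ∀ n : ℕ, ((m : ℤ) - 1) * (Ln m n).card = m ^ (n + 1) - 1 := by
  intro n
  induction n with
  | zero => simp [Ln]
  | succ n ih =>
      rw [card_Ln_succ]
      push_cast
      push_cast at ih
      ring_nf
      ring_nf at ih
      linear_combination (m : ℤ) * ih

lemma C_zero (m : ℕ) (hm : 2 ≤ m) : ∀ n : ℕ,
    ((m : ℤ) - 1) * Cc m n 0 = m ^ (2 * n + 1) - 1 := by
  intro n
  have hm1 : ((m : ℤ) - 1) ≠ 0 := by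
    have : (2 : ℤ) ≤ (m : ℤ) := by exact_mod_cast hm
    omega
  cases n with
  | zero =>
      have h0 : Cc m 0 0 = 1 := by
        have : Ln m 0 ×ˢ Ln m 0 = {(([] : List (Fin m)), ([] : List (Fin m)))} := by
          simp [Ln, Finset.singleton_product_singleton]
        rw [Cc, this]
        rw [Finset.filter_singleton]
        simp [lcp_nil_left]
      rw [h0]
      push_cast
      ring
  | succ n =>
      -- complement count
      have hsplit := Finset.card_filter_add_card_filter_not
        (s := Ln m (n+1) ×ˢ Ln m (n+1))
        (p := fun p => (lcp p.1 p.2).length = 0)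
      have hne : ((Ln m (n+1) ×ˢ Ln m (n+1)).filter
          fun p => ¬ (lcp p.1 p.2).length = 0).card = m * (Ln m n).card ^ 2 := by
        rw [step m n (fun k => ¬ k = 0) (by simp)]
        simp [Finset.card_product, sq]
      have hC : (Cc m (n+1) 0 : ℤ) + m * ((Ln m n).card : ℤ) ^ 2
          = ((Ln m (n+1)).card : ℤ) ^ 2 := by
        have : Cc m (n+1) 0 + m * (Ln m n).card ^ 2 = (Ln m (n+1)).card ^ 2 := by
          rw [Cc, ← hne, hsplit, Finset.card_product, sq]
        exact_mod_cast congrArg (Nat.cast : ℕ → ℤ) this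
      apply mul_left_cancel₀ hm1
      have e1 := s_int m n
      have e2 := s_int m (n + 1)
      have expand : ((m : ℤ) - 1) * (((m : ℤ) - 1) * Cc m (n+1) 0)
          = (((m : ℤ) - 1) * (Ln m (n+1)).card) ^ 2
            - m * (((m : ℤ) - 1) * (Ln m n).card) ^ 2 := by
        linear_combination ((m : ℤ) - 1) ^ 2 * hC
      rw [expand, e1, e2]
      ring

lemma C_shift (m n d : ℕ) : Cc m (n + 1) (d + 1) = m * Cc m n d := by
  rw [Cc, step m n (fun k => k = d + 1) (by simp), Cc]
  simp

lemma C_pow (m : ℕ) : ∀ (d n : ℕ), Cc m (n + d) d = m ^ d * Cc m n 0 := by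
  intro d
  induction d with
  | zero => intro n; simp
  | succ d ih =>
      intro n
      have : n + (d + 1) = (n + d) + 1 := by omega
      rw [this, C_shift, ih, pow_succ]
      ring

/-- For integers `m ≥ 2`, `n ≥ 1` and `1 ≤ d ≤ n`, the set `P_d` of ordered pairs `(a, b)` of
lists over `Fin m` of length at most `n` whose longest common prefix has length exactly `d`
satisfies `(m − 1)·|P_d| = m^d·(m^{2(n−d)+1} − 1)`. -/
theorem stmt_9 (m n d : ℕ) (hm : 2 ≤ m) (hn : 1 ≤ n) (hd : 1 ≤ d) (hdn : d ≤ n)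
    (L : Finset (List (Fin m))) (hL : ∀ l : List (Fin m), l ∈ L ↔ l.length ≤ n)
    (P : Finset (List (Fin m) × List (Fin m)))
    (hP : P = (L ×ˢ L).filter (fun p => (lcp p.1 p.2).length = d)) :
    (m - 1) * P.card = m ^ d * (m ^ (2 * (n - d) + 1) - 1) := by
  have hLn : L = Ln m n := by
    ext l; rw [hL, mem_Ln]
  have hPcard : P.card = Cc m n d := by
    rw [hP, hLn]; rfl
  have hn' : n = (n - d) + d := by omega
  have hC : Cc m n d = m ^ d * Cc m (n - d) 0 := by
    conv_lhs => rw [hn']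
    exact C_pow m d (n - d)
  have hz := C_zero m hm (n - d)
  have h1m : 1 ≤ m := by omega
  have h1p : 1 ≤ m ^ (2 * (n - d) + 1) := Nat.one_le_pow _ _ (by omega)
  zify [h1m, h1p]
  rw [hPcard, hC]
  push_cast
  linear_combination (m : ℤ) ^ d * hz
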